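/- Let G = (V, E) be a graph with nonnegative, pairwise-distinct edge weights, let p ∈ [0,1], and let E' ⊆ E contain each edge independently with probability p. Consider the greedy-based edge-arrival algorithm: an edge e ∈ E \ E' is a candidate if e ∈ Greedy(G[E' ∪ {e}]); the edges of E \ E' are processed in some order and a candidate edge is added to the output matching M if both its endpoints are currently unmatched in M. Then for every rule assigning an arrival order to E \ E' (possibly depending on E'), E[w(M)] ≥ ((1−p)(2p−1)/p) · E[w(Greedy(G[E']))]. -/

import Mathlib

open Finset

open scoped Classical
set_option linter.unusedSectionVars false
set_option linter.unusedVariables false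
set_option maxHeartbeats 1000000

/-- Greedy matching with fuel: repeatedly pick the maximum-weight remaining edge and
discard all edges conflicting with it. -/
noncomputable def greedyAux {α : Type*} [DecidableEq α] (w : α → ℝ)
    (conflict : α → α → Prop) : ℕ → Finset α → Finset α
  | 0, _ => ∅
  | n + 1, F =>
    if h : F.Nonempty then
      let e := (F.exists_max_image w h).choose
      insert e (greedyAux w conflict n (F.filter fun f => ¬ conflict e f))
    else ∅

/-- The greedy matching of an edge set `F`: process edges in decreasing order of weight,
adding an edge whenever it conflicts with no previously added edge. -/
noncomputable def greedy {α : Type*} [DecidableEq α] (w : α → ℝ)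
    (conflict : α → α → Prop) (F : Finset α) : Finset α :=
  greedyAux w conflict F.card F

/-- Two edges of a general graph (given as ordered pairs of endpoints) conflict iff
they share an endpoint. -/
def gconf {V : Type*} (e f : V × V) : Prop :=
  e.1 = f.1 ∨ e.1 = f.2 ∨ e.2 = f.1 ∨ e.2 = f.2

/-- Expectation of `f` over a random subset of `s` containing each element
independently with probability `p`. -/
noncomputable def expSubsets {ι : Type*} (p : ℝ) (s : Finset ι) (f : Finset ι → ℝ) : ℝ :=
  ∑ A ∈ s.powerset, p ^ A.card * (1 - p) ^ (s.card - A.card) * f A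

/-- A set of edges is a matching if no two distinct edges conflict. -/
def isMatching {α : Type*} (conflict : α → α → Prop) (M : Finset α) : Prop :=
  ∀ e ∈ M, ∀ f ∈ M, e ≠ f → ¬ conflict e f

/-- `OPT`: the maximum total weight of a matching contained in the edge set `E`. -/
noncomputable def optWeight {α : Type*} (w : α → ℝ) (conflict : α → α → Prop)
    (E : Finset α) : ℝ :=
  (E.powerset.filter fun M => isMatching conflict M).sup'
    ⟨∅, Finset.mem_filter.mpr ⟨Finset.empty_mem_powerset _,
        fun e he => absurd he (Finset.notMem_empty e)⟩⟩
    (fun M => ∑ e ∈ M, w e)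

/-- One step of the greedy-based edge-arrival algorithm with sample `E'`: the arriving
edge `e` is a candidate if `e ∈ Greedy(G[E' ∪ {e}])`, and a candidate is added if both
of its endpoints are currently unmatched. -/
noncomputable def stepE {V : Type*} [DecidableEq V] (w : V × V → ℝ)
    (E' : Finset (V × V)) (M : Finset (V × V)) (e : V × V) : Finset (V × V) :=
  M ∪ (greedy w gconf (insert e E')).filter
      (fun f => f = e ∧ ∀ g ∈ M, ¬ gconf g f)

/-- The output matching of the greedy-based edge-arrival algorithm with sample `E'`,
when the online edges arrive in the order given by `order`. -/
noncomputable def runE {V : Type*} [DecidableEq V] (w : V × V → ℝ)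
    (E' : Finset (V × V)) (order : List (V × V)) : Finset (V × V) :=
  order.foldl (stepE w E') ∅

namespace Stmt16

section aux
variable {α : Type*} [DecidableEq α] (w : α → ℝ) (c : α → α → Prop)

noncomputable def maxE (F : Finset α) (h : F.Nonempty) : α :=
  (F.exists_max_image w h).choose

lemma maxE_mem (F : Finset α) (h : F.Nonempty) : maxE w F h ∈ F :=
  (F.exists_max_image w h).choose_spec.1

lemma maxE_max (F : Finset α) (h : F.Nonempty) : ∀ x ∈ F, w x ≤ w (maxE w F h) :=
  (F.exists_max_image w h).choose_spec.2

lemma maxE_eq {F : Finset α} (hinj : ∀ x ∈ F, ∀ y ∈ F, w x = w y → x = y) (h : F.Nonempty)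
    {a : α} (ha : a ∈ F) (hmax : ∀ x ∈ F, w x ≤ w a) : maxE w F h = a :=
  hinj _ (maxE_mem w F h) _ ha
    (le_antisymm (hmax _ (maxE_mem w F h)) (maxE_max w F h a ha))

lemma greedyAux_zero (F : Finset α) : greedyAux w c 0 F = ∅ := rfl

lemma greedyAux_succ_of_ne (n : ℕ) {F : Finset α} (h : F.Nonempty) :
    greedyAux w c (n + 1) F
      = insert (maxE w F h) (greedyAux w c n (F.filter fun f => ¬ c (maxE w F h) f)) := by
  rw [greedyAux, dif_pos h]
  rfl

lemma greedyAux_succ_empty (n : ℕ) : greedyAux w c (n + 1) (∅ : Finset α) = ∅ := by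
  rw [greedyAux, dif_neg (by simp)]

lemma greedyAux_subset : ∀ (n : ℕ) (F : Finset α), greedyAux w c n F ⊆ F := by
  intro n
  induction n with
  | zero => intro F; simp [greedyAux_zero]
  | succ n ih =>
    intro F
    rcases F.eq_empty_or_nonempty with rfl | h
    · simp [greedyAux_succ_empty]
    · rw [greedyAux_succ_of_ne w c n h]
      exact insert_subset (maxE_mem w F h) ((ih _).trans (filter_subset _ _))

lemma filter_card_lt (hc : ∀ a, c a a) {F : Finset α} (h : F.Nonempty) :
    (F.filter fun f => ¬ c (maxE w F h) f).card < F.card :=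
  card_lt_card (filter_ssubset.mpr ⟨maxE w F h, maxE_mem w F h, by simp [hc]⟩)

lemma greedyAux_congr (hc : ∀ a, c a a) :
    ∀ (n m : ℕ) (F : Finset α), F.card ≤ n → F.card ≤ m →
      greedyAux w c n F = greedyAux w c m F := by
  intro n
  induction n with
  | zero =>
    intro m F hn _
    have hF : F = ∅ := card_eq_zero.mp (Nat.le_zero.mp hn)
    subst hF
    cases m with
    | zero => rfl
    | succ m => rw [greedyAux_zero, greedyAux_succ_empty]
  | succ n ih =>
    intro m F hn hm
    cases m with
    | zero =>
      have hF : F = ∅ := card_eq_zero.mp (Nat.le_zero.mp hm)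
      subst hF
      rw [greedyAux_zero, greedyAux_succ_empty]
    | succ m =>
      rcases F.eq_empty_or_nonempty with rfl | h
      · rw [greedyAux_succ_empty, greedyAux_succ_empty]
      · rw [greedyAux_succ_of_ne w c n h, greedyAux_succ_of_ne w c m h]
        congr 1
        have hlt := filter_card_lt w c hc h
        exact ih _ _ (by omega) (by omega)

lemma greedy_empty : greedy w c ∅ = ∅ := rfl

lemma greedy_eq (hc : ∀ a, c a a) {F : Finset α} (h : F.Nonempty) :
    greedy w c F
      = insert (maxE w F h) (greedy w c (F.filter fun f => ¬ c (maxE w F h) f)) := by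
  unfold greedy
  obtain ⟨n, hn⟩ : ∃ n, F.card = n + 1 := ⟨F.card - 1, by have := card_pos.mpr h; omega⟩
  rw [hn, greedyAux_succ_of_ne w c n h]
  congr 1
  exact greedyAux_congr w c hc _ _ _ (by have := filter_card_lt w c hc h; omega) le_rfl

lemma greedy_subset (F : Finset α) : greedy w c F ⊆ F := greedyAux_subset w c _ F

lemma greedy_matching_aux (hc : ∀ a, c a a) (hs : ∀ a b, c a b → c b a) :
    ∀ (n : ℕ) (F : Finset α), F.card ≤ n →
      ∀ e ∈ greedy w c F, ∀ f ∈ greedy w c F, e ≠ f → ¬ c e f := by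
  intro n
  induction n with
  | zero =>
    intro F hF
    have hF' : F = ∅ := card_eq_zero.mp (Nat.le_zero.mp hF)
    subst hF'
    simp [greedy_empty]
  | succ n ih =>
    intro F hF e he f hf hef
    rcases F.eq_empty_or_nonempty with rfl | h
    · simp [greedy_empty] at he
    · rw [greedy_eq w c hc h] at he hf
      have hcard : (F.filter fun x => ¬ c (maxE w F h) x).card ≤ n := by
        have := filter_card_lt w c hc h; omega
      rcases mem_insert.mp he with rfl | he'
      · rcases mem_insert.mp hf with heq | hf'
        · exact absurd heq.symm hef
        · have : f ∈ F.filter fun x => ¬ c (maxE w F h) x := greedy_subset w c _ hf'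
          exact (mem_filter.mp this).2
      · rcases mem_insert.mp hf with rfl | hf'
        · have : e ∈ F.filter fun x => ¬ c (maxE w F h) x := greedy_subset w c _ he'
          exact fun hce => (mem_filter.mp this).2 (hs _ _ hce)
        · exact ih _ hcard e he' f hf' hef

lemma greedy_matching (hc : ∀ a, c a a) (hs : ∀ a b, c a b → c b a) {F : Finset α}
    {e f : α} (he : e ∈ greedy w c F) (hf : f ∈ greedy w c F) (hef : e ≠ f) : ¬ c e f :=
  greedy_matching_aux w c hc hs F.card F le_rfl e he f hf hef

lemma greedy_filter_aux (hc : ∀ a, c a a) (t : ℝ) :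
    ∀ (n : ℕ) (F : Finset α), F.card ≤ n → (∀ x ∈ F, ∀ y ∈ F, w x = w y → x = y) →
      (greedy w c F).filter (fun f => t ≤ w f) = greedy w c (F.filter fun f => t ≤ w f) := by
  intro n
  induction n with
  | zero =>
    intro F hF _
    have hF' : F = ∅ := card_eq_zero.mp (Nat.le_zero.mp hF)
    subst hF'
    simp [greedy_empty]
  | succ n ih =>
    intro F hF hinj
    rcases F.eq_empty_or_nonempty with rfl | h
    · simp [greedy_empty]
    · have hcard1 : (F.filter fun x => ¬ c (maxE w F h) x).card ≤ n := by
        have := filter_card_lt w c hc h; omega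
      have hinj1 : ∀ x ∈ F.filter fun x => ¬ c (maxE w F h) x,
          ∀ y ∈ F.filter fun x => ¬ c (maxE w F h) x, w x = w y → x = y :=
        fun x hx y hy => hinj x (filter_subset _ _ hx) y (filter_subset _ _ hy)
      by_cases hta : t ≤ w (maxE w F h)
      · have hne' : (F.filter fun f => t ≤ w f).Nonempty :=
          ⟨maxE w F h, mem_filter.mpr ⟨maxE_mem w F h, hta⟩⟩
        have hmax' : maxE w (F.filter fun f => t ≤ w f) hne' = maxE w F h :=
          maxE_eq w (fun x hx y hy => hinj x (filter_subset _ _ hx) y (filter_subset _ _ hy))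
            hne' (mem_filter.mpr ⟨maxE_mem w F h, hta⟩)
            (fun x hx => maxE_max w F h x (filter_subset _ _ hx))
        rw [greedy_eq w c hc h, greedy_eq w c hc hne', hmax', filter_insert, if_pos hta]
        congr 1
        rw [ih _ hcard1 hinj1]
        congr 1
        rw [filter_comm]
      · have h1 : (greedy w c F).filter (fun f => t ≤ w f) = ∅ :=
          filter_eq_empty_iff.mpr (fun x hx ht =>
            hta (le_trans ht (maxE_max w F h x (greedy_subset w c F hx))))
        have h2 : F.filter (fun f => t ≤ w f) = ∅ :=
          filter_eq_empty_iff.mpr (fun x hx ht => hta (le_trans ht (maxE_max w F h x hx)))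
        rw [h1, h2, greedy_empty]

lemma mem_greedy_iff_heavy (hc : ∀ a, c a a) {F : Finset α}
    (hinj : ∀ x ∈ F, ∀ y ∈ F, w x = w y → x = y) (e : α) :
    e ∈ greedy w c F ↔ e ∈ greedy w c (F.filter fun f => w e ≤ w f) := by
  rw [← greedy_filter_aux w c hc (w e) F.card F le_rfl hinj]
  simp

lemma mem_greedy_congr (hc : ∀ a, c a a) {F G : Finset α}
    (hinjF : ∀ x ∈ F, ∀ y ∈ F, w x = w y → x = y)
    (hinjG : ∀ x ∈ G, ∀ y ∈ G, w x = w y → x = y) (e : α)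
    (hfg : F.filter (fun f => w e ≤ w f) = G.filter (fun f => w e ≤ w f)) :
    e ∈ greedy w c F ↔ e ∈ greedy w c G := by
  rw [mem_greedy_iff_heavy w c hc hinjF e, mem_greedy_iff_heavy w c hc hinjG e, hfg]

lemma blocked_of_heavier (hc : ∀ a, c a a) (hs : ∀ a b, c a b → c b a) {F : Finset α} {γ g : α}
    (hinj : ∀ x ∈ insert g F, ∀ y ∈ insert g F, w x = w y → x = y)
    (hγ : γ ∈ greedy w c F) (hlt : w g < w γ) (hcf : c γ g) :
    g ∉ greedy w c (insert g F) := by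
  have hinjF : ∀ x ∈ F, ∀ y ∈ F, w x = w y → x = y :=
    fun x hx y hy => hinj x (mem_insert_of_mem hx) y (mem_insert_of_mem hy)
  have hγ' : γ ∈ greedy w c (insert g F) := by
    rw [← mem_greedy_congr w c hc hinjF hinj γ ?_]
    · exact hγ
    · ext f
      simp only [mem_filter, mem_insert]
      constructor
      · rintro ⟨hf, hwf⟩; exact ⟨Or.inr hf, hwf⟩
      · rintro ⟨hf | hf, hwf⟩
        · subst hf; exact absurd hwf (not_le.mpr hlt)
        · exact ⟨hf, hwf⟩
  intro hg
  exact greedy_matching w c hc hs hγ' hg (by rintro rfl; exact lt_irrefl _ hlt) hcf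

end aux

end Stmt16

namespace Stmt16

section prob
variable {ι : Type*} [DecidableEq ι] {p : ℝ}

lemma expSubsets_nonneg (h0 : 0 ≤ p) (h1 : p ≤ 1) {s : Finset ι} {f : Finset ι → ℝ}
    (hf : ∀ A ∈ s.powerset, 0 ≤ f A) : 0 ≤ expSubsets p s f := by
  apply Finset.sum_nonneg
  intro A hA
  have h1p : (0:ℝ) ≤ 1 - p := by linarith
  exact mul_nonneg (by positivity) (hf A hA)

lemma expSubsets_mono (h0 : 0 ≤ p) (h1 : p ≤ 1) {s : Finset ι} {f g : Finset ι → ℝ}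
    (hfg : ∀ A ∈ s.powerset, f A ≤ g A) : expSubsets p s f ≤ expSubsets p s g := by
  apply Finset.sum_le_sum
  intro A hA
  have h1p : (0:ℝ) ≤ 1 - p := by linarith
  have : (0:ℝ) ≤ p ^ A.card * (1 - p) ^ (s.card - A.card) := by positivity
  exact mul_le_mul_of_nonneg_left (hfg A hA) this

lemma expSubsets_congr {s : Finset ι} {f g : Finset ι → ℝ}
    (hfg : ∀ A ∈ s.powerset, f A = g A) : expSubsets p s f = expSubsets p s g :=
  Finset.sum_congr rfl (fun A hA => by rw [hfg A hA])

lemma expSubsets_sub {s : Finset ι} (f g : Finset ι → ℝ) :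
    expSubsets p s (fun A => f A - g A) = expSubsets p s f - expSubsets p s g := by
  unfold expSubsets
  rw [← Finset.sum_sub_distrib]
  exact Finset.sum_congr rfl (fun A _ => by ring)

lemma expSubsets_sum {κ : Type*} {s : Finset ι} (t : Finset κ) (F : κ → Finset ι → ℝ) :
    expSubsets p s (fun A => ∑ x ∈ t, F x A) = ∑ x ∈ t, expSubsets p s (F x) := by
  unfold expSubsets
  rw [Finset.sum_comm]
  exact Finset.sum_congr rfl (fun A _ => by rw [Finset.mul_sum])

lemma expSubsets_split {s : Finset ι} {i : ι} (hi : i ∈ s) (f : Finset ι → ℝ) :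
    expSubsets p s f
      = expSubsets p (s.erase i) (fun A => (1 - p) * f A + p * f (insert i A)) := by
  unfold expSubsets
  have hins : insert i (s.erase i) = s := Finset.insert_erase hi
  have hni : i ∉ s.erase i := Finset.notMem_erase i s
  have hcards : s.card = (s.erase i).card + 1 := by
    have := Finset.card_erase_add_one hi; omega
  calc ∑ A ∈ s.powerset, p ^ A.card * (1 - p) ^ (s.card - A.card) * f A
      = ∑ A ∈ (insert i (s.erase i)).powerset,
          p ^ A.card * (1 - p) ^ (s.card - A.card) * f A := by rw [hins]
    _ = ∑ A ∈ (s.erase i).powerset, p ^ A.card * (1 - p) ^ (s.card - A.card) * f A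
        + ∑ A ∈ (s.erase i).powerset,
            p ^ (insert i A).card * (1 - p) ^ (s.card - (insert i A).card) * f (insert i A) :=
        Finset.sum_powerset_insert hni _
    _ = _ := by
        rw [← Finset.sum_add_distrib]
        apply Finset.sum_congr rfl
        intro A hA
        have hAs : A ⊆ s.erase i := Finset.mem_powerset.mp hA
        have hiA : i ∉ A := fun hmem => hni (hAs hmem)
        have hcardA : A.card ≤ (s.erase i).card := Finset.card_le_card hAs
        have h1 : s.card - A.card = ((s.erase i).card - A.card) + 1 := by omega
        have h2 : (insert i A).card = A.card + 1 := Finset.card_insert_of_notMem hiA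
        have h3 : s.card - (A.card + 1) = (s.erase i).card - A.card := by omega
        dsimp only
        rw [h1, h2, h3]
        ring

lemma expSubsets_coin_absent {s : Finset ι} {i : ι} (hi : i ∈ s) {f : Finset ι → ℝ}
    (hf : ∀ A ∈ (s.erase i).powerset, f (insert i A) = f A) :
    expSubsets p s (fun A => if i ∈ A then 0 else f A) = (1 - p) * expSubsets p s f := by
  rw [expSubsets_split hi (fun A => if i ∈ A then 0 else f A), expSubsets_split hi f]
  unfold expSubsets
  rw [Finset.mul_sum]
  apply Finset.sum_congr rfl
  intro A hA
  have hAs : A ⊆ s.erase i := Finset.mem_powerset.mp hA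
  have hiA : i ∉ A := fun hmem => Finset.notMem_erase i s (hAs hmem)
  dsimp only
  rw [if_neg hiA, if_pos (Finset.mem_insert_self i A), hf A hA]
  ring

lemma expSubsets_coin_present {s : Finset ι} {i : ι} (hi : i ∈ s) {f : Finset ι → ℝ}
    (hf : ∀ A ∈ (s.erase i).powerset, f (insert i A) = f A) :
    expSubsets p s (fun A => if i ∈ A then f A else 0) = p * expSubsets p s f := by
  rw [expSubsets_split hi (fun A => if i ∈ A then f A else 0), expSubsets_split hi f]
  unfold expSubsets
  rw [Finset.mul_sum]
  apply Finset.sum_congr rfl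
  intro A hA
  have hAs : A ⊆ s.erase i := Finset.mem_powerset.mp hA
  have hiA : i ∉ A := fun hmem => Finset.notMem_erase i s (hAs hmem)
  dsimp only
  rw [if_neg hiA, if_pos (Finset.mem_insert_self i A), hf A hA]
  ring

end prob

end Stmt16

namespace Stmt16

section main
variable {V : Type*} [DecidableEq V]

lemma gconf_refl (e : V × V) : gconf e e := Or.inl rfl

lemma gconf_symm : ∀ a b : V × V, gconf a b → gconf b a := by
  intro a b h; unfold gconf at *; tauto

lemma gconf_of_shared {u : V} {e f : V × V} (he : u = e.1 ∨ u = e.2)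
    (hf : u = f.1 ∨ u = f.2) : gconf e f := by
  unfold gconf
  rcases he with h | h <;> rcases hf with h' | h' <;>
    first
      | exact Or.inl (h ▸ h' ▸ rfl)
      | exact Or.inr (Or.inl (h ▸ h' ▸ rfl))
      | exact Or.inr (Or.inr (Or.inl (h ▸ h' ▸ rfl)))
      | exact Or.inr (Or.inr (Or.inr (h ▸ h' ▸ rfl)))

variable (w : V × V → ℝ) (E : Finset (V × V))

/-- `g` would be chosen by greedy on sample `A` if its own coin made it present. -/
def qual (A : Finset (V × V)) (g : V × V) : Prop :=
  g ∈ greedy w gconf (insert g (A.erase g))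

/-- The candidate set. -/
noncomputable def Cset (A : Finset (V × V)) : Finset (V × V) :=
  E.filter fun g => g ∉ A ∧ qual w A g

lemma mem_Cset {A g} : g ∈ Cset w E A ↔ g ∈ E ∧ g ∉ A ∧ qual w A g := by
  unfold Cset; simp [Finset.mem_filter]

lemma injOn_sub (hwinj : Set.InjOn w ↑E) {F : Finset (V × V)} (hF : F ⊆ E) :
    ∀ x ∈ F, ∀ y ∈ F, w x = w y → x = y :=
  fun x hx y hy hxy => hwinj (hF hx) (hF hy) hxy

lemma qual_insert_self (A : Finset (V × V)) (g : V × V) :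
    qual w (insert g A) g ↔ qual w A g := by
  unfold qual
  rw [Finset.erase_insert_eq_erase]

lemma qual_coin_congr (hwinj : Set.InjOn w ↑E) {γ h : V × V} (hγ : γ ∈ E) (hh : h ∈ E) (hlt : w γ < w h)
    {A : Finset (V × V)} (hA : A ⊆ E) (hγA : γ ∉ A) :
    qual w (insert γ A) h ↔ qual w A h := by
  unfold qual
  have hsub1 : insert h ((insert γ A).erase h) ⊆ E := by
    intro x hx
    rcases Finset.mem_insert.mp hx with rfl | hx
    · exact hh
    · rcases Finset.mem_insert.mp (Finset.mem_of_mem_erase hx) with rfl | hx'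
      · exact hγ
      · exact hA hx'
  have hsub2 : insert h (A.erase h) ⊆ E := by
    intro x hx
    rcases Finset.mem_insert.mp hx with rfl | hx
    · exact hh
    · exact hA (Finset.mem_of_mem_erase hx)
  apply mem_greedy_congr w gconf gconf_refl (injOn_sub w E hwinj hsub1)
    (injOn_sub w E hwinj hsub2) h
  ext f
  simp only [Finset.mem_filter, Finset.mem_insert, Finset.mem_erase]
  constructor
  · rintro ⟨hf | ⟨hfh, hfγ | hfA⟩, hwf⟩
    · exact ⟨Or.inl hf, hwf⟩
    · subst hfγ; exact absurd hwf (not_le.mpr hlt)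
    · exact ⟨Or.inr ⟨hfh, hfA⟩, hwf⟩
  · rintro ⟨hf | ⟨hfh, hfA⟩, hwf⟩
    · exact ⟨Or.inl hf, hwf⟩
    · exact ⟨Or.inr ⟨hfh, Or.inr hfA⟩, hwf⟩

lemma mem_greedy_iff_qual {A : Finset (V × V)} (hA : A ⊆ E) {h : V × V} :
    h ∈ greedy w gconf A ↔ h ∈ A ∧ qual w A h := by
  constructor
  · intro hg
    have hhA := greedy_subset w gconf A hg
    refine ⟨hhA, ?_⟩
    unfold qual
    rwa [Finset.insert_erase hhA]
  · rintro ⟨hhA, hq⟩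
    unfold qual at hq
    rwa [Finset.insert_erase hhA] at hq

lemma foldl_mono (A : Finset (V × V)) :
    ∀ (l : List (V × V)) (M₀ : Finset (V × V)), M₀ ⊆ l.foldl (stepE w A) M₀ := by
  intro l
  induction l with
  | nil => intro M₀; exact Finset.Subset.refl _
  | cons x t ih =>
    intro M₀
    exact (Finset.subset_union_left).trans (ih (stepE w A M₀ x))

lemma foldl_subset_Cset (A : Finset (V × V)) :
    ∀ (l : List (V × V)), (∀ x ∈ l, x ∈ E ∧ x ∉ A) →
      ∀ M₀, M₀ ⊆ Cset w E A → l.foldl (stepE w A) M₀ ⊆ Cset w E A := by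
  intro l
  induction l with
  | nil => intro _ M₀ h; exact h
  | cons x t ih =>
    intro hl M₀ hM
    apply ih (fun y hy => hl y (List.mem_cons_of_mem _ hy))
    intro f hf
    rcases Finset.mem_union.mp hf with hf | hf
    · exact hM hf
    · obtain ⟨hfg, hfx, -⟩ := Finset.mem_filter.mp hf
      subst hfx
      obtain ⟨hx, hxA⟩ := hl f List.mem_cons_self
      refine (mem_Cset w E).mpr ⟨hx, hxA, ?_⟩
      unfold qual
      rwa [Finset.erase_eq_of_notMem hxA]

lemma foldl_blocked (A : Finset (V × V)) {e : V × V} (he : e ∈ Cset w E A) :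
    ∀ (l : List (V × V)) (M₀ : Finset (V × V)), e ∈ l → e ∉ M₀ →
      e ∈ l.foldl (stepE w A) M₀
        ∨ ∃ g ∈ l.foldl (stepE w A) M₀, g ≠ e ∧ gconf g e := by
  intro l
  induction l with
  | nil => intro M₀ h; exact absurd h List.not_mem_nil
  | cons x t ih =>
    intro M₀ hel heM
    by_cases hxe : x = e
    · subst hxe
      by_cases hblk : ∃ g ∈ M₀, gconf g x
      · obtain ⟨g, hg, hgc⟩ := hblk
        right
        refine ⟨g, foldl_mono w A t _ (Finset.mem_union_left _ hg), ?_, hgc⟩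
        rintro rfl; exact heM hg
      · left
        apply foldl_mono w A t _
        apply Finset.mem_union_right
        apply Finset.mem_filter.mpr
        refine ⟨?_, rfl, fun g hg hc => hblk ⟨g, hg, hc⟩⟩
        obtain ⟨-, hxA, hq⟩ := (mem_Cset w E).mp he
        unfold qual at hq
        rwa [Finset.erase_eq_of_notMem hxA] at hq
    · have het : e ∈ t := by
        rcases List.mem_cons.mp hel with h | h
        · exact absurd h.symm hxe
        · exact h
      apply ih (stepE w A M₀ x) het
      intro hmem
      rcases Finset.mem_union.mp hmem with h | h
      · exact heM h
      · exact hxe ((Finset.mem_filter.mp h).2.1).symm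

end main

end Stmt16

namespace Stmt16

section lemB
variable {V : Type*} [DecidableEq V] (w : V × V → ℝ) (E : Finset (V × V))

/-- there is a candidate at `u` lighter than `h`. -/
def lightCand (A : Finset (V × V)) (u : V) (h : V × V) : Prop :=
  ∃ g ∈ E, w g < w h ∧ (u = g.1 ∨ u = g.2) ∧ g ∉ A ∧ qual w A g

/-- `γ` is the heaviest qualified edge at `u` lighter than `h`. -/
def slicePred (u : V) (h γ : V × V) (A : Finset (V × V)) : Prop :=
  qual w A γ ∧ ∀ g ∈ E, (u = g.1 ∨ u = g.2) → w g < w h → w γ < w g → ¬ qual w A g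

lemma wlt_of_ne (hwinj : Set.InjOn w ↑E) {a b : V × V} (ha : a ∈ E) (hb : b ∈ E)
    (hne : a ≠ b) : w a < w b ∨ w b < w a :=
  lt_or_gt_of_ne (fun heq => hne (hwinj ha hb heq))

lemma claim1 (hwinj : Set.InjOn w ↑E) {A : Finset (V × V)} (hA : A ⊆ E)
    {h : V × V} (hh : h ∈ E) (u : V) :
    (if h ∈ Cset w E A ∧ lightCand w E A u h then (1 : ℝ) else 0)
      = ∑ γ ∈ E.filter (fun g => w g < w h ∧ (u = g.1 ∨ u = g.2)),
          (if γ ∈ A then 0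
           else if h ∈ Cset w E A ∧ slicePred w E u h γ A then (1 : ℝ) else 0) := by
  set Γ := E.filter (fun g => w g < w h ∧ (u = g.1 ∨ u = g.2)) with hΓ
  by_cases hP : h ∈ Cset w E A ∧ lightCand w E A u h
  · obtain ⟨hcand, g₀, hg₀E, hg₀lt, hg₀side, hg₀A, hg₀q⟩ := hP
    have hg₀Γ : g₀ ∈ Γ := Finset.mem_filter.mpr ⟨hg₀E, hg₀lt, hg₀side⟩
    set Q := Γ.filter (fun g => qual w A g) with hQ
    have hneQ : Q.Nonempty := ⟨g₀, Finset.mem_filter.mpr ⟨hg₀Γ, hg₀q⟩⟩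
    set γ₀ := maxE w Q hneQ with hγ₀
    have hγ₀Q : γ₀ ∈ Q := maxE_mem w Q hneQ
    have hγ₀Γ : γ₀ ∈ Γ := (Finset.mem_filter.mp hγ₀Q).1
    have hγ₀q : qual w A γ₀ := (Finset.mem_filter.mp hγ₀Q).2
    obtain ⟨hγ₀E, hγ₀lt, hγ₀side⟩ :
        γ₀ ∈ E ∧ w γ₀ < w h ∧ (u = γ₀.1 ∨ u = γ₀.2) := by
      have := Finset.mem_filter.mp hγ₀Γ; exact ⟨this.1, this.2.1, this.2.2⟩
    -- the champion is unsampled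
    have hγ₀A : γ₀ ∉ A := by
      intro hγ₀A
      have hγ₀greedy : γ₀ ∈ greedy w gconf A :=
        (mem_greedy_iff_qual w E hA).mpr ⟨hγ₀A, hγ₀q⟩
      have hne : g₀ ≠ γ₀ := by rintro rfl; exact hg₀A hγ₀A
      have hlt : w g₀ < w γ₀ := by
        have hle : w g₀ ≤ w γ₀ :=
          maxE_max w Q hneQ g₀ (Finset.mem_filter.mpr ⟨hg₀Γ, hg₀q⟩)
        rcases wlt_of_ne w E hwinj hg₀E hγ₀E hne with hl | hl
        · exact hl
        · exact absurd hle (not_le.mpr hl)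
      have hconf : gconf γ₀ g₀ := gconf_of_shared hγ₀side hg₀side
      have hins : insert g₀ A ⊆ E := Finset.insert_subset hg₀E hA
      have hblocked := blocked_of_heavier w gconf gconf_refl gconf_symm
        (injOn_sub w E hwinj hins) hγ₀greedy hlt hconf
      apply hblocked
      have := hg₀q
      unfold qual at this
      rwa [Finset.erase_eq_of_notMem hg₀A] at this
    rw [if_pos ⟨hcand, g₀, hg₀E, hg₀lt, hg₀side, hg₀A, hg₀q⟩]
    rw [Finset.sum_eq_single_of_mem γ₀ hγ₀Γ]
    · rw [if_neg hγ₀A, if_pos]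
      refine ⟨hcand, hγ₀q, ?_⟩
      intro g hgE hgside hglt hγ₀g hgq
      have hgQ : g ∈ Q :=
        Finset.mem_filter.mpr ⟨Finset.mem_filter.mpr ⟨hgE, hglt, hgside⟩, hgq⟩
      exact absurd (maxE_max w Q hneQ g hgQ) (not_le.mpr hγ₀g)
    · intro γ hγΓ hne
      by_cases hγA : γ ∈ A
      · rw [if_pos hγA]
      · rw [if_neg hγA]
        rw [if_neg]
        rintro ⟨-, hγq, hγmax⟩
        obtain ⟨hγE, hγlt, hγside⟩ :
            γ ∈ E ∧ w γ < w h ∧ (u = γ.1 ∨ u = γ.2) := by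
          have := Finset.mem_filter.mp hγΓ; exact ⟨this.1, this.2.1, this.2.2⟩
        have hγQ : γ ∈ Q := Finset.mem_filter.mpr ⟨hγΓ, hγq⟩
        have hle : w γ ≤ w γ₀ := maxE_max w Q hneQ γ hγQ
        have hlt : w γ < w γ₀ := by
          rcases wlt_of_ne w E hwinj hγE hγ₀E hne with hl | hl
          · exact hl
          · exact absurd hle (not_le.mpr hl)
        exact hγmax γ₀ hγ₀E hγ₀side hγ₀lt hlt hγ₀q
  · rw [if_neg hP]
    symm
    apply Finset.sum_eq_zero
    intro γ hγΓ
    by_cases hγA : γ ∈ A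
    · rw [if_pos hγA]
    · rw [if_neg hγA, if_neg]
      rintro ⟨hcand, hγq, -⟩
      obtain ⟨hγE, hγlt, hγside⟩ :
          γ ∈ E ∧ w γ < w h ∧ (u = γ.1 ∨ u = γ.2) := by
        have := Finset.mem_filter.mp hγΓ; exact ⟨this.1, this.2.1, this.2.2⟩
      exact hP ⟨hcand, γ, hγE, hγlt, hγside, hγA, hγq⟩

lemma claim3 (hwinj : Set.InjOn w ↑E) {A : Finset (V × V)}
    {h : V × V} (u : V) :
    ∑ γ ∈ E.filter (fun g => w g < w h ∧ (u = g.1 ∨ u = g.2)),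
        (if h ∈ Cset w E A ∧ slicePred w E u h γ A then (1 : ℝ) else 0)
      ≤ (if h ∈ Cset w E A then (1 : ℝ) else 0) := by
  set Γ := E.filter (fun g => w g < w h ∧ (u = g.1 ∨ u = g.2)) with hΓ
  by_cases hex : ∃ γ₁ ∈ Γ, h ∈ Cset w E A ∧ slicePred w E u h γ₁ A
  · obtain ⟨γ₁, hγ₁Γ, hcand, hs₁⟩ := hex
    have key : ∑ γ ∈ Γ, (if h ∈ Cset w E A ∧ slicePred w E u h γ A then (1 : ℝ) else 0)
        = 1 := by
      rw [Finset.sum_eq_single_of_mem γ₁ hγ₁Γ]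
      · rw [if_pos ⟨hcand, hs₁⟩]
      · intro γ hγΓ hne
        rw [if_neg]
        rintro ⟨-, hsγ⟩
        obtain ⟨hγE, hγlt, hγside⟩ :
            γ ∈ E ∧ w γ < w h ∧ (u = γ.1 ∨ u = γ.2) := by
          have := Finset.mem_filter.mp hγΓ; exact ⟨this.1, this.2.1, this.2.2⟩
        obtain ⟨hγ₁E, hγ₁lt, hγ₁side⟩ :
            γ₁ ∈ E ∧ w γ₁ < w h ∧ (u = γ₁.1 ∨ u = γ₁.2) := by
          have := Finset.mem_filter.mp hγ₁Γ; exact ⟨this.1, this.2.1, this.2.2⟩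
        rcases wlt_of_ne w E hwinj hγE hγ₁E hne with hl | hl
        · exact hsγ.2 γ₁ hγ₁E hγ₁side hγ₁lt hl hs₁.1
        · exact hs₁.2 γ hγE hγside hγlt hl hsγ.1
    rw [key, if_pos hcand]
  · have key : ∑ γ ∈ Γ, (if h ∈ Cset w E A ∧ slicePred w E u h γ A then (1 : ℝ) else 0)
        = 0 := by
      apply Finset.sum_eq_zero
      intro γ hγΓ
      rw [if_neg]
      intro hcon
      exact hex ⟨γ, hγΓ, hcon⟩
    rw [key]
    split <;> norm_num

lemma lemB {p : ℝ} (hp0 : 0 ≤ p) (hp1 : p ≤ 1) (hwinj : Set.InjOn w ↑E)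
    {h : V × V} (hh : h ∈ E) (u : V) :
    expSubsets p E (fun A => if h ∈ Cset w E A ∧ lightCand w E A u h then (1 : ℝ) else 0)
      ≤ (1 - p) * expSubsets p E (fun A => if h ∈ Cset w E A then (1 : ℝ) else 0) := by
  set Γ := E.filter (fun g => w g < w h ∧ (u = g.1 ∨ u = g.2)) with hΓ
  have step1 : expSubsets p E
      (fun A => if h ∈ Cset w E A ∧ lightCand w E A u h then (1 : ℝ) else 0)
      = ∑ γ ∈ Γ, expSubsets p E
          (fun A => if γ ∈ A then 0
            else if h ∈ Cset w E A ∧ slicePred w E u h γ A then (1 : ℝ) else 0) := by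
    rw [← expSubsets_sum]
    apply expSubsets_congr
    intro A hA
    exact claim1 w E hwinj (Finset.mem_powerset.mp hA) hh u
  rw [step1]
  have step2 : ∀ γ ∈ Γ, expSubsets p E
      (fun A => if γ ∈ A then 0
        else if h ∈ Cset w E A ∧ slicePred w E u h γ A then (1 : ℝ) else 0)
      = (1 - p) * expSubsets p E
          (fun A => if h ∈ Cset w E A ∧ slicePred w E u h γ A then (1 : ℝ) else 0) := by
    intro γ hγΓ
    obtain ⟨hγE, hγlt, hγside⟩ :
        γ ∈ E ∧ w γ < w h ∧ (u = γ.1 ∨ u = γ.2) := by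
      have := Finset.mem_filter.mp hγΓ; exact ⟨this.1, this.2.1, this.2.2⟩
    apply expSubsets_coin_absent hγE
    intro A hA
    have hAsub : A ⊆ E.erase γ := Finset.mem_powerset.mp hA
    have hAE : A ⊆ E := hAsub.trans (Finset.erase_subset _ _)
    have hγA : γ ∉ A := fun hmem => Finset.notMem_erase γ E (hAsub hmem)
    have hγh : γ ≠ h := by rintro rfl; exact lt_irrefl _ hγlt
    have iffCset : h ∈ Cset w E (insert γ A) ↔ h ∈ Cset w E A := by
      rw [mem_Cset, mem_Cset]
      have h1 : h ∉ insert γ A ↔ h ∉ A := by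
        simp only [Finset.mem_insert, not_or]
        constructor
        · rintro ⟨-, h2⟩; exact h2
        · intro h2; exact ⟨fun he => hγh he.symm, h2⟩
      have h2 : qual w (insert γ A) h ↔ qual w A h :=
        qual_coin_congr w E hwinj hγE hh hγlt hAE hγA
      tauto
    have iffSlice : slicePred w E u h γ (insert γ A) ↔ slicePred w E u h γ A := by
      unfold slicePred
      have h1 : qual w (insert γ A) γ ↔ qual w A γ := qual_insert_self w A γ
      have h2 : ∀ g ∈ E, (u = g.1 ∨ u = g.2) → w g < w h → w γ < w g →
          (qual w (insert γ A) g ↔ qual w A g) := by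
        intro g hgE _ _ hγg
        exact qual_coin_congr w E hwinj hγE hgE hγg hAE hγA
      constructor
      · rintro ⟨hq, hmax⟩
        refine ⟨h1.mp hq, ?_⟩
        intro g hgE hgs hglt hγg hgq
        exact hmax g hgE hgs hglt hγg ((h2 g hgE hgs hglt hγg).mpr hgq)
      · rintro ⟨hq, hmax⟩
        refine ⟨h1.mpr hq, ?_⟩
        intro g hgE hgs hglt hγg hgq
        exact hmax g hgE hgs hglt hγg ((h2 g hgE hgs hglt hγg).mp hgq)
    by_cases hcase : h ∈ Cset w E A ∧ slicePred w E u h γ A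
    · rw [if_pos hcase, if_pos ⟨iffCset.mpr hcase.1, iffSlice.mpr hcase.2⟩]
    · rw [if_neg hcase, if_neg]
      intro hcon
      exact hcase ⟨iffCset.mp hcon.1, iffSlice.mp hcon.2⟩
  rw [Finset.sum_congr rfl step2, ← Finset.mul_sum]
  apply mul_le_mul_of_nonneg_left _ (by linarith : (0:ℝ) ≤ 1 - p)
  rw [← expSubsets_sum]
  apply expSubsets_mono hp0 hp1
  intro A hA
  exact claim3 w E hwinj u

lemma prCand {p : ℝ} {h : V × V} (hh : h ∈ E) :
    expSubsets p E (fun A => if h ∈ Cset w E A then (1 : ℝ) else 0)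
      = (1 - p) * expSubsets p E (fun A => if qual w A h then (1 : ℝ) else 0) := by
  have step : expSubsets p E (fun A => if h ∈ Cset w E A then (1 : ℝ) else 0)
      = expSubsets p E (fun A => if h ∈ A then 0
          else if qual w A h then (1 : ℝ) else 0) := by
    apply expSubsets_congr
    intro A hA
    by_cases hhA : h ∈ A
    · rw [if_pos hhA, if_neg]
      rw [mem_Cset]
      rintro ⟨-, hcon, -⟩
      exact hcon hhA
    · rw [if_neg hhA]
      by_cases hq : qual w A h
      · rw [if_pos ((mem_Cset w E).mpr ⟨hh, hhA, hq⟩), if_pos hq]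
      · rw [if_neg, if_neg hq]
        rw [mem_Cset]
        rintro ⟨-, -, hcon⟩
        exact hq hcon
  rw [step]
  apply expSubsets_coin_absent hh
  intro A hA
  have : qual w (insert h A) h ↔ qual w A h := qual_insert_self w A h
  by_cases hq : qual w A h
  · rw [if_pos (this.mpr hq), if_pos hq]
  · rw [if_neg (fun hcon => hq (this.mp hcon)), if_neg hq]

lemma prGreedy {p : ℝ} (hwinj : Set.InjOn w ↑E) {h : V × V} (hh : h ∈ E) :
    expSubsets p E (fun A => if h ∈ greedy w gconf A then (1 : ℝ) else 0)
      = p * expSubsets p E (fun A => if qual w A h then (1 : ℝ) else 0) := by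
  have step : expSubsets p E (fun A => if h ∈ greedy w gconf A then (1 : ℝ) else 0)
      = expSubsets p E (fun A => if h ∈ A then (if qual w A h then (1 : ℝ) else 0)
          else 0) := by
    apply expSubsets_congr
    intro A hA
    have hAE : A ⊆ E := Finset.mem_powerset.mp hA
    by_cases hhA : h ∈ A
    · rw [if_pos hhA]
      by_cases hq : qual w A h
      · rw [if_pos ((mem_greedy_iff_qual w E hAE).mpr ⟨hhA, hq⟩), if_pos hq]
      · rw [if_neg (fun hcon => hq ((mem_greedy_iff_qual w E hAE).mp hcon).2), if_neg hq]
    · rw [if_neg hhA, if_neg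
        (fun hcon => hhA ((mem_greedy_iff_qual w E hAE).mp hcon).1)]
  rw [step]
  apply expSubsets_coin_present hh
  intro A hA
  have : qual w (insert h A) h ↔ qual w A h := qual_insert_self w A h
  by_cases hq : qual w A h
  · rw [if_pos (this.mpr hq), if_pos hq]
  · rw [if_neg (fun hcon => hq (this.mp hcon)), if_neg hq]

end lemB

end Stmt16

namespace Stmt16

section booking
variable {V : Type*} [DecidableEq V]

def sideOf (h : V × V) (b : Bool) : V := if b then h.1 else h.2

lemma exists_side {u : V} {e : V × V} (h : u = e.1 ∨ u = e.2) :
    ∃ b : Bool, sideOf e b = u := by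
  rcases h with h | h
  · exact ⟨true, h.symm⟩
  · exact ⟨false, h.symm⟩

lemma shared_of_gconf {g e : V × V} (h : gconf g e) :
    ∃ u : V, (u = g.1 ∨ u = g.2) ∧ (u = e.1 ∨ u = e.2) := by
  rcases h with h | h | h | h
  · exact ⟨g.1, Or.inl rfl, Or.inl h⟩
  · exact ⟨g.1, Or.inl rfl, Or.inr h⟩
  · exact ⟨g.2, Or.inr rfl, Or.inl h⟩
  · exact ⟨g.2, Or.inr rfl, Or.inr h⟩

lemma booking (w : V × V → ℝ) (E : Finset (V × V)) (hwinj : Set.InjOn w ↑E)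
    (hw0 : ∀ e ∈ E, 0 ≤ w e)
    (σ : Finset (V × V) → List (V × V))
    (hσ : ∀ B : Finset (V × V), (σ B).Perm (E \ B).toList)
    {A : Finset (V × V)} (hA : A ⊆ E) :
    ∑ e ∈ Cset w E A \ runE w A (σ A), w e
      ≤ ∑ x ∈ E ×ˢ (Finset.univ : Finset Bool),
          w x.1 * (if x.1 ∈ Cset w E A ∧ lightCand w E A (sideOf x.1 x.2) x.1
            then (1 : ℝ) else 0) := by
  classical
  set M := runE w A (σ A) with hM
  set s := Cset w E A \ M with hs
  have hlist : ∀ x ∈ σ A, x ∈ E ∧ x ∉ A := by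
    intro x hx
    have : x ∈ (E \ A).toList := ((hσ A).mem_iff).mp hx
    have := Finset.mem_toList.mp this
    exact ⟨(Finset.mem_sdiff.mp this).1, (Finset.mem_sdiff.mp this).2⟩
  have hMC : M ⊆ Cset w E A := by
    rw [hM]
    exact foldl_subset_Cset w E A (σ A) hlist ∅ (Finset.empty_subset _)
  have hR3 : ∀ e ∈ Cset w E A, e ∈ M ∨ ∃ g ∈ M, g ≠ e ∧ gconf g e := by
    intro e he
    obtain ⟨heE, heA, -⟩ := (mem_Cset w E).mp he
    have hel : e ∈ σ A :=
      ((hσ A).mem_iff).mpr (Finset.mem_toList.mpr (Finset.mem_sdiff.mpr ⟨heE, heA⟩))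
    exact foldl_blocked w E A he (σ A) ∅ hel (Finset.notMem_empty e)
  set GOOD : (V × V) → ((V × V) × Bool) → Prop := fun e x =>
    x.1 ∈ Cset w E A ∧ lightCand w E A (sideOf x.1 x.2) x.1 ∧ w e ≤ w x.1 ∧
      (x.1 = e ∨ (x.1 ∈ M ∧ (sideOf x.1 x.2 = e.1 ∨ sideOf x.1 x.2 = e.2) ∧
        ¬ ∃ g' ∈ E, w g' < w e ∧ gconf g' e ∧ g' ∉ A ∧ qual w A g')) with hGOOD
  have hex : ∀ e ∈ s, ∃ x, GOOD e x := by
    intro e he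
    obtain ⟨heC, heM⟩ := Finset.mem_sdiff.mp he
    obtain ⟨heE, heA, heq⟩ := (mem_Cset w E).mp heC
    by_cases hNL : ∃ g' ∈ E, w g' < w e ∧ gconf g' e ∧ g' ∉ A ∧ qual w A g'
    · obtain ⟨g', hg'E, hg'lt, hg'c, hg'A, hg'q⟩ := hNL
      obtain ⟨u, hug', hue⟩ := shared_of_gconf hg'c
      obtain ⟨b, hb⟩ := exists_side hue
      refine ⟨(e, b), heC, ?_, le_refl _, Or.inl rfl⟩
      exact ⟨g', hg'E, hg'lt, by rw [hb]; exact hug', hg'A, hg'q⟩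
    · rcases hR3 e heC with hcon | ⟨g, hgM, hgne, hgconf⟩
      · exact absurd hcon heM
      · have hgC := hMC hgM
        obtain ⟨hgE, hgA, hgq⟩ := (mem_Cset w E).mp hgC
        have hglt : w e < w g := by
          rcases wlt_of_ne w E hwinj hgE heE hgne with h | h
          · exact absurd ⟨g, hgE, h, hgconf, hgA, hgq⟩ hNL
          · exact h
        obtain ⟨u, hug, hue⟩ := shared_of_gconf hgconf
        obtain ⟨b, hb⟩ := exists_side hug
        refine ⟨(g, b), hgC, ?_, le_of_lt hglt, Or.inr ⟨hgM, ?_, hNL⟩⟩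
        · exact ⟨e, heE, hglt, by rw [hb]; exact hue, heA, heq⟩
        · rw [hb]; exact hue
  set φ : (V × V) → ((V × V) × Bool) := fun e =>
    if hx : ∃ x, GOOD e x then hx.choose else (e, true) with hφdef
  have hφ : ∀ e ∈ s, GOOD e (φ e) := by
    intro e he
    rw [hφdef]
    dsimp only
    rw [dif_pos (hex e he)]
    exact (hex e he).choose_spec
  have hinjφ : ∀ e₁ ∈ s, ∀ e₂ ∈ s, φ e₁ = φ e₂ → e₁ = e₂ := by
    intro e₁ he₁ e₂ he₂ heq
    by_contra hne
    have hg₁ := hφ e₁ he₁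
    have hg₂ := hφ e₂ he₂
    rw [heq] at hg₁
    set x := φ e₂ with hx
    obtain ⟨hxC, -, -, hcase₁⟩ := hg₁
    obtain ⟨-, -, -, hcase₂⟩ := hg₂
    have hM₁ : e₁ ∉ M := (Finset.mem_sdiff.mp he₁).2
    have hM₂ : e₂ ∉ M := (Finset.mem_sdiff.mp he₂).2
    obtain ⟨he₁E, he₁A, he₁q⟩ := (mem_Cset w E).mp (Finset.mem_sdiff.mp he₁).1
    obtain ⟨he₂E, he₂A, he₂q⟩ := (mem_Cset w E).mp (Finset.mem_sdiff.mp he₂).1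
    rcases hcase₁ with h₁ | ⟨hxM, hs₁, hNL₁⟩
    · rcases hcase₂ with h₂ | ⟨hxM, hs₂, hNL₂⟩
      · exact hne (h₁ ▸ h₂ ▸ rfl)
      · exact hM₁ (h₁ ▸ hxM)
    · rcases hcase₂ with h₂ | ⟨hxM₂, hs₂, hNL₂⟩
      · exact hM₂ (h₂ ▸ hxM)
      · rcases wlt_of_ne w E hwinj he₁E he₂E hne with hlt | hlt
        · exact hNL₂ ⟨e₁, he₁E, hlt, gconf_of_shared hs₁ hs₂, he₁A, he₁q⟩
        · exact hNL₁ ⟨e₂, he₂E, hlt, gconf_of_shared hs₂ hs₁, he₂A, he₂q⟩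
  set v : (V × V) × Bool → ℝ := fun x =>
    w x.1 * (if x.1 ∈ Cset w E A ∧ lightCand w E A (sideOf x.1 x.2) x.1
      then (1 : ℝ) else 0) with hv
  calc ∑ e ∈ s, w e ≤ ∑ e ∈ s, v (φ e) := by
        apply Finset.sum_le_sum
        intro e he
        obtain ⟨hxC, hxL, hwle, -⟩ := hφ e he
        rw [hv]
        dsimp only
        rw [if_pos ⟨hxC, hxL⟩, mul_one]
        exact hwle
    _ = ∑ x ∈ s.image φ, v x := (Finset.sum_image hinjφ).symm
    _ ≤ ∑ x ∈ E ×ˢ (Finset.univ : Finset Bool), v x := by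
        apply Finset.sum_le_sum_of_subset_of_nonneg
        · intro x hx
          obtain ⟨e, he, rfl⟩ := Finset.mem_image.mp hx
          have := (hφ e he).1
          exact Finset.mem_product.mpr
            ⟨((mem_Cset w E).mp this).1, Finset.mem_univ _⟩
        · intro x hxE _
          apply mul_nonneg (hw0 x.1 (Finset.mem_product.mp hxE).1)
          split <;> norm_num

end booking

end Stmt16

namespace Stmt16

lemma expSubsets_const_mul {ι : Type*} {p : ℝ} {s : Finset ι} (c : ℝ) (f : Finset ι → ℝ) :
    expSubsets p s (fun A => c * f A) = c * expSubsets p s f := by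
  unfold expSubsets
  rw [Finset.mul_sum]
  exact Finset.sum_congr rfl (fun A _ => by ring)

lemma sum_weight_eq_ind {V : Type*} [DecidableEq V] (w : V × V → ℝ) (E : Finset (V × V))
    {C : Finset (V × V)} (hC : C ⊆ E) :
    ∑ e ∈ C, w e = ∑ h ∈ E, w h * (if h ∈ C then (1 : ℝ) else 0) := by
  have h1 : ∑ h ∈ E, w h * (if h ∈ C then (1 : ℝ) else 0)
      = ∑ h ∈ E, (if h ∈ C then w h else 0) :=
    Finset.sum_congr rfl (fun h _ => by split <;> ring)
  rw [h1, ← Finset.sum_filter]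
  congr 1
  ext x
  simp only [Finset.mem_filter]
  exact ⟨fun h => ⟨hC h, h⟩, fun h => h.2⟩

end Stmt16


open Stmt16 in
/-- Credit edge reimbursement: for the greedy-based edge-arrival algorithm with edge-sampling probability `p`, and every arrival-order rule of `E \ E'`, `E[w(M)] ≥ ((1-p)(2p-1)/p) · E[w(Greedy(G[E']))]`. -/
theorem stmt16 {V : Type*} [DecidableEq V]
    (E : Finset (V × V)) (w : V × V → ℝ)
    (hprop : ∀ e ∈ E, e.1 ≠ e.2) (hw0 : ∀ e ∈ E, 0 ≤ w e) (hwinj : Set.InjOn w ↑E)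
    (p : ℝ) (hp : p ∈ Set.Icc (0 : ℝ) 1)
    (σ : Finset (V × V) → List (V × V))
    (hσ : ∀ A : Finset (V × V), (σ A).Perm (E \ A).toList) :
    expSubsets p E (fun E' => ∑ e ∈ runE w E' (σ E'), w e)
      ≥ ((1 - p) * (2 * p - 1) / p) * expSubsets p E (fun E' => ∑ e ∈ greedy w gconf E', w e) := by
  classical
  obtain ⟨hp0, hp1⟩ := hp
  set r : (V × V) → ℝ :=
    fun h => expSubsets p E (fun A => if qual w A h then (1 : ℝ) else 0) with hrdef
  set S : ℝ := ∑ h ∈ E, w h * r h with hSdef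
  have hlist : ∀ A : Finset (V × V), ∀ x ∈ σ A, x ∈ E ∧ x ∉ A := by
    intro A x hx
    have h1 : x ∈ (E \ A).toList := ((hσ A).mem_iff).mp hx
    have h2 := Finset.mem_toList.mp h1
    exact ⟨(Finset.mem_sdiff.mp h2).1, (Finset.mem_sdiff.mp h2).2⟩
  have hMC : ∀ A : Finset (V × V), runE w A (σ A) ⊆ Cset w E A := by
    intro A
    exact foldl_subset_Cset w E A (σ A) (hlist A) ∅ (Finset.empty_subset _)
  have hCse : ∀ A : Finset (V × V), Cset w E A ⊆ E := fun A => Finset.filter_subset _ _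
  -- expected candidate weight
  have hEC : expSubsets p E (fun A => ∑ e ∈ Cset w E A, w e) = (1 - p) * S := by
    have h1 : expSubsets p E (fun A => ∑ e ∈ Cset w E A, w e)
        = ∑ h ∈ E, expSubsets p E
            (fun A => w h * (if h ∈ Cset w E A then (1 : ℝ) else 0)) := by
      rw [← expSubsets_sum]
      exact expSubsets_congr (fun A _ => sum_weight_eq_ind w E (hCse A))
    rw [h1]
    rw [hSdef, Finset.mul_sum]
    apply Finset.sum_congr rfl
    intro h hh
    rw [expSubsets_const_mul, prCand w E hh]
    ring
  -- expected greedy weight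
  have hEG : expSubsets p E (fun A => ∑ e ∈ greedy w gconf A, w e) = p * S := by
    have h1 : expSubsets p E (fun A => ∑ e ∈ greedy w gconf A, w e)
        = ∑ h ∈ E, expSubsets p E
            (fun A => w h * (if h ∈ greedy w gconf A then (1 : ℝ) else 0)) := by
      rw [← expSubsets_sum]
      apply expSubsets_congr
      intro A hA
      exact sum_weight_eq_ind w E
        ((greedy_subset w gconf A).trans (Finset.mem_powerset.mp hA))
    rw [h1]
    rw [hSdef, Finset.mul_sum]
    apply Finset.sum_congr rfl
    intro h hh
    rw [expSubsets_const_mul, prGreedy w E hwinj hh]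
    ring
  -- loss bound
  have hloss : expSubsets p E (fun A => ∑ e ∈ Cset w E A \ runE w A (σ A), w e)
      ≤ 2 * ((1 - p) ^ 2 * S) := by
    have h1 : expSubsets p E (fun A => ∑ e ∈ Cset w E A \ runE w A (σ A), w e)
        ≤ expSubsets p E (fun A => ∑ x ∈ E ×ˢ (Finset.univ : Finset Bool),
            w x.1 * (if x.1 ∈ Cset w E A ∧ lightCand w E A (sideOf x.1 x.2) x.1
              then (1 : ℝ) else 0)) := by
      apply expSubsets_mono hp0 hp1
      intro A hA
      exact booking w E hwinj hw0 σ hσ (Finset.mem_powerset.mp hA)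
    have h2 : expSubsets p E (fun A => ∑ x ∈ E ×ˢ (Finset.univ : Finset Bool),
          w x.1 * (if x.1 ∈ Cset w E A ∧ lightCand w E A (sideOf x.1 x.2) x.1
            then (1 : ℝ) else 0))
        = ∑ x ∈ E ×ˢ (Finset.univ : Finset Bool),
            w x.1 * expSubsets p E
              (fun A => if x.1 ∈ Cset w E A ∧ lightCand w E A (sideOf x.1 x.2) x.1
                then (1 : ℝ) else 0) := by
      rw [expSubsets_sum]
      exact Finset.sum_congr rfl (fun x _ => expSubsets_const_mul _ _)
    have h3 : ∑ x ∈ E ×ˢ (Finset.univ : Finset Bool),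
          w x.1 * expSubsets p E
            (fun A => if x.1 ∈ Cset w E A ∧ lightCand w E A (sideOf x.1 x.2) x.1
              then (1 : ℝ) else 0)
        ≤ ∑ x ∈ E ×ˢ (Finset.univ : Finset Bool), w x.1 * ((1 - p) * ((1 - p) * r x.1)) := by
      apply Finset.sum_le_sum
      intro x hx
      have hxE : x.1 ∈ E := (Finset.mem_product.mp hx).1
      apply mul_le_mul_of_nonneg_left _ (hw0 x.1 hxE)
      calc expSubsets p E
            (fun A => if x.1 ∈ Cset w E A ∧ lightCand w E A (sideOf x.1 x.2) x.1
              then (1 : ℝ) else 0)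
          ≤ (1 - p) * expSubsets p E
              (fun A => if x.1 ∈ Cset w E A then (1 : ℝ) else 0) :=
            lemB w E hp0 hp1 hwinj hxE (sideOf x.1 x.2)
        _ = (1 - p) * ((1 - p) * r x.1) := by rw [prCand w E hxE]
    have h4 : ∑ x ∈ E ×ˢ (Finset.univ : Finset Bool), w x.1 * ((1 - p) * ((1 - p) * r x.1))
        = 2 * ((1 - p) ^ 2 * S) := by
      rw [Finset.sum_product, hSdef, Finset.mul_sum, Finset.mul_sum]
      apply Finset.sum_congr rfl
      intro h hh
      rw [Fintype.sum_bool]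
      ring
    linarith
  -- algorithm expectation
  have hMeq : expSubsets p E (fun A => ∑ e ∈ runE w A (σ A), w e)
      = expSubsets p E (fun A => ∑ e ∈ Cset w E A, w e)
        - expSubsets p E (fun A => ∑ e ∈ Cset w E A \ runE w A (σ A), w e) := by
    rw [← expSubsets_sub]
    apply expSubsets_congr
    intro A hA
    have := Finset.sum_sdiff (f := w) (hMC A)
    linarith
  by_cases hpz : p = 0
  · subst hpz
    have hRHS : expSubsets 0 E (fun A => ∑ e ∈ greedy w gconf A, w e) = 0 := by
      rw [hEG]; ring
    rw [hRHS, mul_zero]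
    apply expSubsets_nonneg le_rfl (by norm_num)
    intro A hA
    apply Finset.sum_nonneg
    intro e he
    exact hw0 e (hCse A (hMC A he))
  · have hco : ((1 - p) * (2 * p - 1) / p) * (p * S) = (1 - p) * (2 * p - 1) * S := by
      field_simp
    have hid : (1 - p) * S - 2 * ((1 - p) ^ 2 * S) = (1 - p) * (2 * p - 1) * S := by ring
    rw [ge_iff_le, hEG, hco]
    rw [hMeq, hEC]
    linarith
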